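/- Let X be a complex Banach space with dim X ≥ 3 and let A ∈ B(X) with A ≠ 0. Then the range of A is one-dimensional if and only if for every T ∈ B(X), δ(ATA) ∈ {1, 2} and δ(TAT) ∈ {1, 2}. -/

import Mathlib

/-- The ascent of a bounded linear operator: the least `n : ℕ` with
`ker (T ^ n) = ker (T ^ (n+1))`, and `⊤` (i.e. `∞`) if no such `n` exists. -/
noncomputable def ascent {X : Type*} [NormedAddCommGroup X] [NormedSpace ℂ X]
    (T : X →L[ℂ] X) : ℕ∞ :=
  sInf (Nat.cast '' {m : ℕ | LinearMap.ker (↑(T ^ m) : X →ₗ[ℂ] X) = LinearMap.ker (↑(T ^ (m + 1)) : X →ₗ[ℂ] X)})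

/-- The descent of a bounded linear operator: the least `n : ℕ` with
`range (T ^ n) = range (T ^ (n+1))`, and `⊤` (i.e. `∞`) if no such `n` exists. -/
noncomputable def descent {X : Type*} [NormedAddCommGroup X] [NormedSpace ℂ X]
    (T : X →L[ℂ] X) : ℕ∞ :=
  sInf (Nat.cast '' {m : ℕ | LinearMap.range (↑(T ^ m) : X →ₗ[ℂ] X) = LinearMap.range (↑(T ^ (m + 1)) : X →ₗ[ℂ] X)})


section Aux
open Submodule Cardinal
variable {X : Type*} [NormedAddCommGroup X] [NormedSpace ℂ X]

lemma exists_dual_clm {n : ℕ} (v : Fin n → X) (hv : LinearIndependent ℂ v) (c : Fin n → ℂ) :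
    ∃ f : X →L[ℂ] ℂ, ∀ i, f (v i) = c i := by
  set V : Submodule ℂ X := span ℂ (Set.range v) with hV
  haveI : FiniteDimensional ℂ V := FiniteDimensional.span_of_finite ℂ (Set.finite_range v)
  let b : Module.Basis (Fin n) ℂ V := Module.Basis.span hv
  let φ : V →ₗ[ℂ] ℂ := b.constr ℂ c
  let φc : V →L[ℂ] ℂ := LinearMap.toContinuousLinearMap φ
  obtain ⟨g, hg, -⟩ := exists_extension_norm_eq V φc
  refine ⟨g, fun i => ?_⟩
  have hmem : v i ∈ V := subset_span (Set.mem_range_self i)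
  have h1 : g (v i) = φc ⟨v i, hmem⟩ := by
    have := hg ⟨v i, hmem⟩
    simpa using this
  rw [h1]
  have h2 : (⟨v i, hmem⟩ : V) = b i := by
    apply Subtype.ext
    exact congrArg Subtype.val (Module.Basis.span_apply hv i).symm
  rw [h2]
  simp [φc, φ, Module.Basis.constr_basis]

lemma range_pow_succ (S : X →L[ℂ] X) (m : ℕ) :
    LinearMap.range (↑(S ^ (m+1)) : X →ₗ[ℂ] X) = Submodule.map (S : X →ₗ[ℂ] X) (LinearMap.range (↑(S ^ m) : X →ₗ[ℂ] X)) := by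
  ext y
  simp only [LinearMap.mem_range, Submodule.mem_map]
  constructor
  · rintro ⟨x, rfl⟩
    exact ⟨(S^m) x, ⟨x, rfl⟩, by rw [pow_succ']; rfl⟩
  · rintro ⟨z, ⟨x, rfl⟩, rfl⟩
    exact ⟨x, by simp [pow_succ', ContinuousLinearMap.mul_apply]⟩

lemma mem_succ_of_mem (S : X →L[ℂ] X) {m : ℕ}
    (h : LinearMap.range (↑(S ^ m) : X →ₗ[ℂ] X) = LinearMap.range (↑(S ^ (m + 1)) : X →ₗ[ℂ] X)) :
    LinearMap.range (↑(S ^ (m+1)) : X →ₗ[ℂ] X) = LinearMap.range (↑(S ^ (m + 1 + 1)) : X →ₗ[ℂ] X) := by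
  rw [range_pow_succ S (m+1), ← h, ← range_pow_succ S m]
  exact h

lemma descent_not_mem {S : X →L[ℂ] X} (h2 : S ^ 2 ≠ 0) (h3 : S ^ 3 = 0) :
    descent S ∉ ({1, 2} : Set ℕ∞) := by
  intro hmem
  have hle : descent S < 3 := by
    rcases hmem with h | h <;> rw [h] <;> norm_num
  rw [descent] at hle
  obtain ⟨a, ⟨m, hm, rfl⟩, hlt⟩ := sInf_lt_iff.mp hle
  have hm3 : m < 3 := by exact_mod_cast hlt
  have h2m : LinearMap.range (↑(S ^ 2) : X →ₗ[ℂ] X) = LinearMap.range (↑(S ^ 3) : X →ₗ[ℂ] X) := by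
    interval_cases m
    · exact mem_succ_of_mem S (mem_succ_of_mem S hm)
    · exact mem_succ_of_mem S hm
    · exact hm
  have hbot : LinearMap.range (↑(S ^ 2) : X →ₗ[ℂ] X) = ⊥ := by
    rw [h2m, h3]
    ext x
    simp [eq_comm]
  apply h2
  ext x
  have hx : (S ^ 2) x ∈ LinearMap.range (↑(S ^ 2) : X →ₗ[ℂ] X) := LinearMap.mem_range_self _ x
  rw [hbot] at hx
  simpa using hx

lemma descent_mem_of_rank_le_one (hdim : 3 ≤ Module.rank ℂ X) (S : X →L[ℂ] X)
    (hS : Module.rank ℂ (LinearMap.range (S : X →ₗ[ℂ] X)) ≤ 1) :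
    descent S ∈ ({1, 2} : Set ℕ∞) := by
  have h0 : LinearMap.range (↑(S ^ 0) : X →ₗ[ℂ] X) ≠ LinearMap.range (↑(S ^ 1) : X →ₗ[ℂ] X) := by
    intro h
    have htop : LinearMap.range (↑(S ^ 0) : X →ₗ[ℂ] X) = (⊤ : Submodule ℂ X) := by
      rw [pow_zero]
      exact LinearMap.range_eq_top.mpr (fun x => ⟨x, rfl⟩)
    rw [htop, pow_one] at h
    have := hS
    rw [← h] at this
    rw [rank_top ℂ X] at this
    exact absurd (hdim.trans this) (by norm_num)
  have h2 : LinearMap.range (↑(S ^ 2) : X →ₗ[ℂ] X) = LinearMap.range (↑(S ^ 3) : X →ₗ[ℂ] X) := by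
    obtain ⟨u, hu⟩ : (LinearMap.range (S : X →ₗ[ℂ] X)).IsPrincipal :=
      (Submodule.rank_le_one_iff_isPrincipal _).mp hS
    have hle : LinearMap.range (↑(S ^ 2) : X →ₗ[ℂ] X) ≤ LinearMap.range (S : X →ₗ[ℂ] X) := by
      rintro y ⟨x, rfl⟩
      exact ⟨S x, by simp [pow_two, ContinuousLinearMap.mul_apply]⟩
    by_cases hbot : LinearMap.range (↑(S ^ 2) : X →ₗ[ℂ] X) = ⊥
    · have hS2 : S ^ 2 = 0 := by
        ext x
        have hx : (S ^ 2) x ∈ LinearMap.range (↑(S ^ 2) : X →ₗ[ℂ] X) := LinearMap.mem_range_self _ x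
        rw [hbot] at hx
        simpa using hx
      have hS3 : S ^ 3 = 0 := by
        rw [pow_succ, hS2, zero_mul]
      rw [hS2, hS3]
    · -- range S ≤ range S^2
      have hge : LinearMap.range (S : X →ₗ[ℂ] X) ≤ LinearMap.range (↑(S ^ 2) : X →ₗ[ℂ] X) := by
        obtain ⟨z, hz, hz0⟩ : ∃ z ∈ LinearMap.range (↑(S ^ 2) : X →ₗ[ℂ] X), z ≠ 0 := by
          by_contra hc
          push_neg at hc
          exact hbot (le_bot_iff.mp (fun z hz => by simpa using hc z hz))
        have hzu : z ∈ span ℂ {u} := by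
          rw [← hu]
          exact hle hz
        obtain ⟨a, ha⟩ := mem_span_singleton.mp hzu
        have ha0 : a ≠ 0 := by rintro rfl; simp at ha; exact hz0 ha.symm
        have hu_mem : u ∈ LinearMap.range (↑(S ^ 2) : X →ₗ[ℂ] X) := by
          have : a⁻¹ • z = u := by rw [← ha, smul_smul, inv_mul_cancel₀ ha0, one_smul]
          rw [← this]
          exact Submodule.smul_mem _ _ hz
        rw [hu]
        rw [span_singleton_le_iff_mem]
        exact hu_mem
      have h1 : LinearMap.range (↑(S ^ 1) : X →ₗ[ℂ] X) = LinearMap.range (↑(S ^ (1 + 1)) : X →ₗ[ℂ] X) := by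
        rw [pow_one]
        exact le_antisymm (by rw [show (1+1) = 2 from rfl]; exact hge) (by rw [show (1+1) = 2 from rfl]; exact hle)
      have := mem_succ_of_mem S h1
      norm_num at this ⊢
      exact this
  -- now conclude
  set s : Set ℕ := {m : ℕ | LinearMap.range (↑(S ^ m) : X →ₗ[ℂ] X) = LinearMap.range (↑(S ^ (m + 1)) : X →ₗ[ℂ] X)} with hs
  have h2s : (2 : ℕ) ∈ s := by
    simp only [hs, Set.mem_setOf_eq]
    norm_num
    exact h2
  have hle2 : descent S ≤ 2 := sInf_le ⟨2, h2s, rfl⟩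
  have hge1 : 1 ≤ descent S := by
    apply le_sInf
    rintro a ⟨m, hm, rfl⟩
    have hm0 : m ≠ 0 := by
      rintro rfl
      exact h0 (by simpa using hm)
    exact_mod_cast Nat.one_le_iff_ne_zero.mpr hm0
  have hne : descent S ≠ ⊤ := ne_top_of_le_ne_top (by norm_num) hle2
  lift descent S to ℕ using hne with k hk
  have hk2 : k ≤ 2 := by exact_mod_cast hle2
  have hk1 : 1 ≤ k := by exact_mod_cast hge1
  interval_cases k
  · exact Or.inl rfl
  · exact Or.inr rfl

lemma rank_range_ATA_le (A T : X →L[ℂ] X) (hA : Module.rank ℂ (LinearMap.range (A : X →ₗ[ℂ] X)) = 1) :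
    Module.rank ℂ (LinearMap.range (↑(A * T * A) : X →ₗ[ℂ] X)) ≤ 1 := by
  have hle : LinearMap.range (↑(A * T * A) : X →ₗ[ℂ] X) ≤ LinearMap.range (A : X →ₗ[ℂ] X) := by
    rintro y ⟨x, rfl⟩
    exact ⟨(T * A) x, by simp [ContinuousLinearMap.mul_apply]⟩
  calc Module.rank ℂ (LinearMap.range (↑(A * T * A) : X →ₗ[ℂ] X)) ≤ Module.rank ℂ (LinearMap.range (A : X →ₗ[ℂ] X)) :=
        Submodule.rank_mono hle
    _ = 1 := hA

lemma rank_range_TAT_le (A T : X →L[ℂ] X) (hA : Module.rank ℂ (LinearMap.range (A : X →ₗ[ℂ] X)) = 1) :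
    Module.rank ℂ (LinearMap.range (↑(T * A * T) : X →ₗ[ℂ] X)) ≤ 1 := by
  have h1 : LinearMap.range (↑(T * A * T) : X →ₗ[ℂ] X) =
      Submodule.map (T : X →ₗ[ℂ] X) (LinearMap.range (↑(A * T) : X →ₗ[ℂ] X)) := by
    ext y
    simp only [LinearMap.mem_range, Submodule.mem_map]
    constructor
    · rintro ⟨x, rfl⟩
      exact ⟨(A * T) x, ⟨x, rfl⟩, by simp [ContinuousLinearMap.mul_apply]⟩
    · rintro ⟨z, ⟨x, rfl⟩, rfl⟩
      exact ⟨x, by simp [ContinuousLinearMap.mul_apply]⟩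
  rw [h1]
  calc Module.rank ℂ (Submodule.map (T : X →ₗ[ℂ] X) (LinearMap.range (↑(A * T) : X →ₗ[ℂ] X)))
      ≤ Module.rank ℂ (LinearMap.range (↑(A * T) : X →ₗ[ℂ] X)) := rank_map_le _ _
    _ ≤ Module.rank ℂ (LinearMap.range (A : X →ₗ[ℂ] X)) := Submodule.rank_mono (by
        rintro y ⟨x, rfl⟩; exact ⟨T x, by simp [ContinuousLinearMap.mul_apply]⟩)
    _ = 1 := hA

-- scalar lemma

lemma scalar_of_all_eigen (A : X →L[ℂ] X) (h : ∀ x : X, A x ∈ span ℂ {x})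
    (hnt : ∃ x : X, x ≠ 0) : ∃ c : ℂ, ∀ x, A x = c • x := by
  obtain ⟨x₀, hx₀⟩ := hnt
  obtain ⟨c, hc⟩ := mem_span_singleton.mp (h x₀)
  refine ⟨c, fun y => ?_⟩
  by_cases hy : y ∈ span ℂ {x₀}
  · obtain ⟨t, rfl⟩ := mem_span_singleton.mp hy
    rw [map_smul, ← hc, smul_comm]
  · obtain ⟨d, hd⟩ := mem_span_singleton.mp (h y)
    obtain ⟨e, he⟩ := mem_span_singleton.mp (h (x₀ + y))
    have hsum : e • x₀ + e • y = c • x₀ + d • y := by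
      rw [← smul_add, he, map_add, ← hc, ← hd]
    have hindep : ∀ a b : ℂ, a • x₀ + b • y = 0 → a = 0 ∧ b = 0 := by
      intro a b hab
      have hb : b = 0 := by
        by_contra hb
        apply hy
        have hyy : y = b⁻¹ • (-(a • x₀)) := by
          have h1 : b • y = -(a • x₀) := by
            have := hab
            rw [add_comm] at this
            linear_combination (norm := module) this
          rw [← h1, smul_smul, inv_mul_cancel₀ hb, one_smul]
        rw [hyy]
        exact smul_mem _ _ (neg_mem (smul_mem _ _ (mem_span_singleton_self x₀)))
      refine ⟨?_, hb⟩
      rw [hb, zero_smul, add_zero] at hab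
      exact (smul_eq_zero.mp hab).resolve_right hx₀
    have hkey : (e - c) • x₀ + (e - d) • y = 0 := by
      rw [sub_smul, sub_smul]
      rw [← sub_eq_zero] at hsum
      calc e • x₀ - c • x₀ + (e • y - d • y)
          = e • x₀ + e • y - (c • x₀ + d • y) := by abel
        _ = 0 := hsum
    obtain ⟨h1, h2⟩ := hindep _ _ hkey
    have hdc : d = c := by
      have he1 : e = c := sub_eq_zero.mp h1
      have he2 : e = d := sub_eq_zero.mp h2
      rw [← he2, he1]
    rw [← hd, hdc]

lemma rank_span_pair_le (a b : X) : Module.rank ℂ (span ℂ {a, b}) ≤ 2 := by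
  calc Module.rank ℂ (span ℂ {a, b}) ≤ #({a, b} : Set X) := rank_span_le _
    _ ≤ #({b} : Set X) + 1 := Cardinal.mk_insert_le
    _ ≤ 2 := by rw [Cardinal.mk_singleton]; norm_num

lemma exists_notin_span_pair (hdim : 3 ≤ Module.rank ℂ X) (a b : X) :
    ∃ x : X, x ∉ span ℂ {a, b} := by
  by_contra hc
  push_neg at hc
  have htop : (span ℂ {a, b} : Submodule ℂ X) = ⊤ := eq_top_iff.mpr (fun x _ => hc x)
  have := rank_span_pair_le a b
  rw [htop, rank_top] at this
  exact absurd (hdim.trans this) (by norm_num)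

lemma exists_notin_span_singleton (hdim : 3 ≤ Module.rank ℂ X) (a : X) :
    ∃ x : X, x ∉ span ℂ {a} := by
  obtain ⟨x, hx⟩ := exists_notin_span_pair hdim a a
  exact ⟨x, by simpa using hx⟩

lemma exists_Az_notin (A : X →L[ℂ] X) (hA : A ≠ 0)
    (hA1 : Module.rank ℂ (LinearMap.range (A : X →ₗ[ℂ] X)) ≠ 1) (w : X) :
    ∃ z : X, A z ∉ span ℂ {w} := by
  by_contra hc
  push_neg at hc
  have hle : LinearMap.range (A : X →ₗ[ℂ] X) ≤ span ℂ {w} := by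
    rintro y ⟨x, rfl⟩; exact hc x
  have h1 : Module.rank ℂ (LinearMap.range (A : X →ₗ[ℂ] X)) ≤ 1 := by
    calc Module.rank ℂ (LinearMap.range (A : X →ₗ[ℂ] X)) ≤ Module.rank ℂ (span ℂ {w}) :=
          Submodule.rank_mono hle
      _ ≤ #({w} : Set X) := rank_span_le _
      _ = 1 := Cardinal.mk_singleton w
  have h0 : Module.rank ℂ (LinearMap.range (A : X →ₗ[ℂ] X)) = 0 :=
    Cardinal.lt_one_iff_zero.mp (lt_of_le_of_ne h1 hA1)
  have hbot : LinearMap.range (A : X →ₗ[ℂ] X) = ⊥ := by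
    rw [← Submodule.rank_eq_zero (R := ℂ)]
    exact h0
  apply hA
  ext x
  have hx : A x ∈ LinearMap.range (A : X →ₗ[ℂ] X) := LinearMap.mem_range_self _ x
  rw [hbot] at hx
  simpa using hx

lemma hearts (A : X →L[ℂ] X) (hdim : 3 ≤ Module.rank ℂ X)
    (hrk : ∀ w : X, ∃ z : X, A z ∉ span ℂ {w})
    (hns : ∃ y : X, A y ∉ span ℂ {y}) :
    ∃ u1 u2 : X, A u2 ∉ span ℂ {A u1} ∧ A u1 ∉ span ℂ {A u2} ∧
      (u1 ∉ span ℂ {A u1, A u2} ∨ u2 ∉ span ℂ {A u1, A u2}) := by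
  by_contra hcon
  push_neg at hcon
  -- hcon : ∀ u1 u2, Au2 ∉ span{Au1} → Au1 ∉ span{Au2} → u1 ∈ span ∧ u2 ∈ span
  obtain ⟨y, hy⟩ := hns
  have hy0 : y ≠ 0 := by rintro rfl; simp at hy
  have hAy0 : A y ≠ 0 := fun h => hy (by rw [h]; exact zero_mem _)
  have hmut : ∀ v : X, A v ∉ span ℂ {A y} → A y ∉ span ℂ {A v} := by
    intro v hv hcon2
    obtain ⟨c, hc⟩ := mem_span_singleton.mp hcon2
    have hc0 : c ≠ 0 := by rintro rfl; simp at hc; exact hAy0 hc.symm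
    apply hv
    rw [mem_span_singleton]
    exact ⟨c⁻¹, by rw [← hc, smul_smul, inv_mul_cancel₀ hc0, one_smul]⟩
  have step2 : ∀ v v' : X, A v ∉ span ℂ {A y} → A v' ∉ span ℂ {A y} →
      A v' ∈ span ℂ {A y, A v} := by
    intro v v' hv hv'
    by_contra h'
    have h1 := (hcon y v hv (hmut v hv)).1
    have h2 := (hcon y v' hv' (hmut v' hv')).1
    obtain ⟨c1, c2, hc⟩ := mem_span_pair.mp h1
    obtain ⟨d1, d2, hd⟩ := mem_span_pair.mp h2
    by_cases hc2 : c2 = 0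
    · rw [hc2, zero_smul, add_zero] at hc
      have hc1 : c1 ≠ 0 := by rintro rfl; rw [zero_smul] at hc; exact hy0 hc.symm
      apply hy
      rw [mem_span_singleton]
      refine ⟨c1⁻¹, ?_⟩
      calc c1⁻¹ • y = c1⁻¹ • (c1 • A y) := by rw [hc]
        _ = A y := by rw [smul_smul, inv_mul_cancel₀ hc1, one_smul]
    · -- A v ∈ span {A y, A v'}
      have hAv : A v = c2⁻¹ • ((d1 - c1) • A y + d2 • A v') := by
        have : c2 • A v = (d1 - c1) • A y + d2 • A v' := by
          have := hc.trans hd.symm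
          linear_combination (norm := module) this
        rw [← this, smul_smul, inv_mul_cancel₀ hc2, one_smul]
      obtain ⟨e1, e2, he⟩ : ∃ e1 e2 : ℂ, e1 • A y + e2 • A v' = A v := by
        refine ⟨c2⁻¹ * (d1 - c1), c2⁻¹ * d2, ?_⟩
        rw [hAv]
        module
      by_cases he2 : e2 = 0
      · rw [he2, zero_smul, add_zero] at he
        exact hv (mem_span_singleton.mpr ⟨e1, he⟩)
      · apply h'
        rw [mem_span_pair]
        refine ⟨-(e2⁻¹ * e1), e2⁻¹, ?_⟩
        have : e2 • A v' = A v - e1 • A y := by linear_combination (norm := module) he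
        calc -(e2⁻¹ * e1) • A y + e2⁻¹ • A v
            = e2⁻¹ • (A v - e1 • A y) := by module
          _ = e2⁻¹ • (e2 • A v') := by rw [this]
          _ = A v' := by rw [smul_smul, inv_mul_cancel₀ he2, one_smul]
  obtain ⟨v, hv⟩ := hrk (A y)
  set W : Submodule ℂ X := span ℂ {A y, A v} with hW
  have hAyW : A y ∈ W := subset_span (by simp)
  have hAvW : A v ∈ W := subset_span (by simp)
  have step4 : ∀ x : X, A x ∈ W := by
    intro x
    by_cases hx : A x ∈ span ℂ {A y}
    · exact span_mono (by simp) hx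
    · exact step2 v x hv hx
  have hvne : A v ≠ 0 := fun h => hv (by rw [h]; exact zero_mem _)
  have step5 : y ∈ W := (hcon y v hv (hmut v hv)).1
  obtain ⟨x, hxW⟩ := exists_notin_span_pair hdim (A y) (A v)
  have step7 : ∀ z : X, z ∉ W → A z = 0 := by
    intro z hzW
    by_contra hAz
    by_cases hc : A z ∈ span ℂ {A y}
    · -- A z = d • A y, d ≠ 0
      obtain ⟨d, hd⟩ := mem_span_singleton.mp hc
      have hd0 : d ≠ 0 := by rintro rfl; rw [zero_smul] at hd; exact hAz hd.symm
      have h1 : A z ∉ span ℂ {A v} := by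
        intro hmem
        obtain ⟨c, hcc⟩ := mem_span_singleton.mp hmem
        have hc0 : c ≠ 0 := by rintro rfl; rw [zero_smul] at hcc; exact hAz hcc.symm
        apply hv
        rw [mem_span_singleton]
        refine ⟨c⁻¹ * d, ?_⟩
        calc (c⁻¹ * d) • A y = c⁻¹ • (d • A y) := mul_smul _ _ _
          _ = c⁻¹ • (c • A v) := by rw [hd, ← hcc]
          _ = A v := by rw [smul_smul, inv_mul_cancel₀ hc0, one_smul]
      have h2 : A v ∉ span ℂ {A z} := by
        intro hmem
        obtain ⟨e, hee⟩ := mem_span_singleton.mp hmem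
        have he0 : e ≠ 0 := by rintro rfl; rw [zero_smul] at hee; exact hvne hee.symm
        apply hv
        rw [mem_span_singleton]
        exact ⟨e * d, by rw [mul_smul, hd, hee]⟩
      have := (hcon v z h1 h2).2
      have hsub : span ℂ {A v, A z} ≤ W := by
        rw [span_le]
        intro t ht
        rcases ht with rfl | rfl
        · exact hAvW
        · exact step4 z
      exact hzW (hsub this)
    · have := (hcon y z hc (hmut z hc)).2
      have hsub : span ℂ {A y, A z} ≤ W := by
        rw [span_le]
        intro t ht
        rcases ht with rfl | rfl
        · exact hAyW
        · exact step4 z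
      exact hzW (hsub this)
  have hxy : x + y ∉ W := by
    intro h
    exact hxW (by simpa using W.sub_mem h step5)
  have h1 := step7 x hxW
  have h2 := step7 (x + y) hxy
  rw [map_add, h1, zero_add] at h2
  exact hAy0 h2

lemma li_triple {a b c : X} (h1 : a ∉ span ℂ {b, c}) (h2 : b ∉ span ℂ {c}) (h3 : c ≠ 0) :
    LinearIndependent ℂ ![a, b, c] := by
  rw [show (![a,b,c]) = Fin.cons a ![b,c] from rfl, linearIndependent_fin_cons]
  refine ⟨?_, by rw [show Set.range ![b, c] = {b, c} from by ext t; simp [or_comm]]; exact h1⟩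
  rw [show (![b,c]) = Fin.cons b ![c] from rfl, linearIndependent_fin_cons]
  refine ⟨?_, by simpa using h2⟩
  exact LinearIndependent.of_subsingleton (v := ![c]) 0 h3

lemma li_quad {d a b c : X} (h0 : d ∉ span ℂ {a, b, c}) (h1 : a ∉ span ℂ {b, c})
    (h2 : b ∉ span ℂ {c}) (h3 : c ≠ 0) :
    LinearIndependent ℂ ![d, a, b, c] := by
  rw [show (![d,a,b,c]) = Fin.cons d ![a,b,c] from rfl, linearIndependent_fin_cons]
  refine ⟨li_triple h1 h2 h3, ?_⟩
  rw [show Set.range ![a, b, c] = {a, b, c} from by ext t; simp; tauto]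
  exact h0

lemma mem_span_triple' {x a b c : X} (h : x ∈ span ℂ ({a, b, c} : Set X)) :
    ∃ p q r : ℂ, x = p • a + q • b + r • c := by
  rw [mem_span_insert] at h
  obtain ⟨p, z, hz, rfl⟩ := h
  rw [mem_span_insert] at hz
  obtain ⟨q, w, hw, rfl⟩ := hz
  rw [mem_span_singleton] at hw
  obtain ⟨r, rfl⟩ := hw
  exact ⟨p, q, r, by module⟩

lemma TAT_apply (A : X →L[ℂ] X) (f g : X →L[ℂ] ℂ) (u1 u2 : X) (x : X) :
    ((f.smulRight u1 + g.smulRight u2) * A * (f.smulRight u1 + g.smulRight u2)) x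
      = f x • ((f.smulRight u1 + g.smulRight u2) (A u1))
        + g x • ((f.smulRight u1 + g.smulRight u2) (A u2)) := by
  set T := f.smulRight u1 + g.smulRight u2 with hT
  have h1 : (T * A * T) x = T (A (T x)) := rfl
  have h2 : T x = f x • u1 + g x • u2 := by simp [hT]
  rw [h1, h2, map_add, map_smul, map_smul, map_add, map_smul, map_smul]

lemma constructionIIb (A : X →L[ℂ] X) {u1 u2 : X} {p q r : ℂ}
    (hp : A u2 ∉ span ℂ {A u1}) (hp2 : A u1 ∉ span ℂ {A u2})
    (hu : u1 ∉ span ℂ {A u1, A u2})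
    (hdec : u2 = p • u1 + q • A u1 + r • A u2)
    (hr : r ≠ 0) (hpp : p ≠ 0) :
    ∃ T : X →L[ℂ] X, (T * A * T) ^ 2 ≠ 0 ∧ (T * A * T) ^ 3 = 0 := by
  have hAu2 : A u2 ≠ 0 := fun h => hp (by rw [h]; exact zero_mem _)
  have hAu1 : A u1 ≠ 0 := fun h => hp2 (by rw [h]; exact zero_mem _)
  have hu2 : u2 ≠ 0 := fun h => hAu2 (by rw [h, map_zero])
  have li3 := li_triple hu hp2 hAu2
  obtain ⟨f, hf⟩ := exists_dual_clm _ li3 ![1, 0, -p/r]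
  obtain ⟨g, hg⟩ := exists_dual_clm _ li3 ![0, r, -q]
  have hf0 : f u1 = 1 := by simpa using hf 0
  have hf1 : f (A u1) = 0 := by simpa using hf 1
  have hf2 : f (A u2) = -p/r := by simpa using hf 2
  have hg0 : g u1 = 0 := by simpa using hg 0
  have hg1 : g (A u1) = r := by simpa using hg 1
  have hg2 : g (A u2) = -q := by simpa using hg 2
  have hfu2 : f u2 = 0 := by
    rw [hdec]
    simp only [map_add, map_smul, hf0, hf1, hf2, smul_eq_mul]
    field_simp
    ring
  have hgu2 : g u2 = 0 := by
    rw [hdec]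
    simp only [map_add, map_smul, hg0, hg1, hg2, smul_eq_mul]
    ring
  set T := f.smulRight u1 + g.smulRight u2 with hT
  set R := T * A * T with hR
  have hTA1 : T (A u1) = r • u2 := by simp [hT, hf1, hg1]
  have hTA2 : T (A u2) = (-p/r) • u1 + (-q) • u2 := by simp [hT, hf2, hg2]
  have hRx : ∀ x, R x = ((-p/r) * g x) • u1 + (r * f x - q * g x) • u2 := by
    intro x
    rw [hR, TAT_apply, hTA1, hTA2]
    module
  have hfR : ∀ x, f (R x) = (-p/r) * g x := by
    intro x
    rw [hRx x, map_add, map_smul, map_smul, hf0, hfu2]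
    simp
  have hgR : ∀ x, g (R x) = 0 := by
    intro x
    rw [hRx x, map_add, map_smul, map_smul, hg0, hgu2]
    simp
  have hR2 : ∀ x, R (R x) = (-p * g x) • u2 := by
    intro x
    rw [hRx (R x), hfR, hgR]
    have hcoef : r * (-p / r * g x) - q * 0 = -p * g x := by
      field_simp
      ring
    rw [hcoef]
    simp
  have hR3 : ∀ x, R (R (R x)) = 0 := by
    intro x
    rw [hRx (R (R x))]
    have hfRR : f (R (R x)) = 0 := by
      rw [hR2 x, map_smul, hfu2, smul_zero]
    have hgRR : g (R (R x)) = 0 := by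
      rw [hR2 x, map_smul, hgu2, smul_zero]
    rw [hfRR, hgRR]
    simp
  refine ⟨T, ?_, ?_⟩
  · intro hzero
    have h1 : (R ^ 2) (A u1) = (-p * r) • u2 := by
      rw [pow_two]
      show R (R (A u1)) = _
      rw [hR2 (A u1), hg1]
    rw [← hR] at hzero
    rw [hzero] at h1
    simp only [ContinuousLinearMap.zero_apply] at h1
    have : (-p * r) • u2 ≠ 0 := smul_ne_zero (by simp [hpp, hr]) hu2
    exact this h1.symm
  · rw [← hR]
    ext x
    have : (R ^ 3) x = R (R (R x)) := by
      rw [pow_succ, pow_two]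
      rfl
    rw [this, hR3 x]
    simp

lemma construction_main (A : X →L[ℂ] X) {u1 u2 : X}
    (hp : A u2 ∉ span ℂ {A u1}) (hp2 : A u1 ∉ span ℂ {A u2})
    (hu : u1 ∉ span ℂ {A u1, A u2}) :
    ∃ T : X →L[ℂ] X, (T * A * T) ^ 2 ≠ 0 ∧ (T * A * T) ^ 3 = 0 := by
  have hAu2 : A u2 ≠ 0 := fun h => hp (by rw [h]; exact zero_mem _)
  have hAu1 : A u1 ≠ 0 := fun h => hp2 (by rw [h]; exact zero_mem _)
  have hu1 : u1 ≠ 0 := fun h => hu (by rw [h]; exact zero_mem _)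
  have hu2 : u2 ≠ 0 := fun h => hAu2 (by rw [h, map_zero])
  have li3 := li_triple hu hp2 hAu2
  by_cases hq : u2 ∈ span ℂ ({u1, A u1, A u2} : Set X)
  · obtain ⟨p, q, r, hdec⟩ := mem_span_triple' hq
    by_cases hr : r = 0
    · -- case r = 0 : direct construction
      have hq0 : q ≠ 0 := by
        intro hq0
        rw [hr, hq0] at hdec
        simp only [zero_smul, add_zero] at hdec
        apply hp
        rw [hdec, map_smul]
        exact smul_mem _ _ (mem_span_singleton_self _)
      obtain ⟨f, hf⟩ := exists_dual_clm _ li3 ![0, 1, 0]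
      obtain ⟨g, hg⟩ := exists_dual_clm _ li3 ![0, 0, 1]
      have hf0 : f u1 = 0 := by simpa using hf 0
      have hf1 : f (A u1) = 1 := by simpa using hf 1
      have hf2 : f (A u2) = 0 := by simpa using hf 2
      have hg0 : g u1 = 0 := by simpa using hg 0
      have hg1 : g (A u1) = 0 := by simpa using hg 1
      have hg2 : g (A u2) = 1 := by simpa using hg 2
      have hfu2 : f u2 = q := by
        rw [hdec]
        simp [hf0, hf1, hf2, hr]
      have hgu2 : g u2 = 0 := by
        rw [hdec]
        simp [hg0, hg1, hg2, hr]
      set T := f.smulRight u1 + g.smulRight u2 with hT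
      set R := T * A * T with hR
      have hTA1 : T (A u1) = u1 := by simp [hT, hf1, hg1]
      have hTA2 : T (A u2) = u2 := by simp [hT, hf2, hg2]
      have hRx : ∀ x, R x = f x • u1 + g x • u2 := by
        intro x
        rw [hR, TAT_apply, hTA1, hTA2]
      have hR2 : ∀ x, R (R x) = (q * g x) • u1 := by
        intro x
        rw [hRx (R x), hRx x, map_add, map_smul, map_smul, map_add, map_smul, map_smul,
          hf0, hg0, hfu2, hgu2]
        simp only [smul_eq_mul, mul_zero, zero_add, mul_comm]
        module
      have hR3 : ∀ x, R (R (R x)) = 0 := by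
        intro x
        rw [hRx (R (R x)), hR2 x, map_smul, map_smul, hf0, hg0]
        simp
      refine ⟨T, ?_, ?_⟩
      · intro hzero
        have h1 : (R ^ 2) (A u2) = q • u1 := by
          rw [pow_two]
          show R (R (A u2)) = _
          rw [hR2 (A u2), hg2, mul_one]
        rw [← hR] at hzero
        rw [hzero] at h1
        simp only [ContinuousLinearMap.zero_apply] at h1
        exact (smul_ne_zero hq0 hu1) h1.symm
      · rw [← hR]
        ext x
        have : (R ^ 3) x = R (R (R x)) := by rw [pow_succ, pow_two]; rfl
        rw [this, hR3 x]
        simp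
    · -- r ≠ 0 : reduce to constructionIIb, shifting if p = 0
      by_cases hpp : p = 0
      · -- use u2' = u2 + u1
        have hp' : A (u2 + u1) ∉ span ℂ {A u1} := by
          intro h
          rw [map_add] at h
          apply hp
          have := sub_mem h (mem_span_singleton_self (A u1))
          simpa using this
        have hp2' : A u1 ∉ span ℂ {A (u2 + u1)} := by
          intro h
          obtain ⟨c, hc⟩ := mem_span_singleton.mp h
          rw [map_add] at hc
          have hc0 : c ≠ 0 := by
            rintro rfl
            rw [zero_smul] at hc
            exact hAu1 hc.symm
          apply hp
          rw [mem_span_singleton]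
          refine ⟨c⁻¹ - 1, ?_⟩
          have : A u2 = c⁻¹ • A u1 - A u1 := by
            have h2 : c⁻¹ • (c • (A u2 + A u1)) = c⁻¹ • A u1 := by rw [hc]
            rw [smul_smul, inv_mul_cancel₀ hc0, one_smul] at h2
            linear_combination (norm := module) h2
          rw [this]
          module
        have hu' : u1 ∉ span ℂ {A u1, A (u2 + u1)} := by
          intro h
          obtain ⟨a, b, hab⟩ := mem_span_pair.mp h
          apply hu
          rw [mem_span_pair]
          rw [map_add] at hab
          exact ⟨a + b, b, by linear_combination (norm := module) hab⟩
        have hdec' : u2 + u1 = (p+1) • u1 + (q-r) • A u1 + r • A (u2 + u1) := by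
          rw [map_add]
          linear_combination (norm := module) hdec
        obtain ⟨T, hT⟩ := constructionIIb A hp' hp2' hu' hdec' hr (by rw [hpp]; norm_num)
        exact ⟨T, hT⟩
      · exact constructionIIb A hp hp2 hu hdec hr hpp
  · -- quadruple independent case
    have li4 := li_quad hq hu hp2 hAu2
    obtain ⟨f, hf⟩ := exists_dual_clm _ li4 ![1, 0, 1, 0]
    obtain ⟨g, hg⟩ := exists_dual_clm _ li4 ![0, 0, 0, 1]
    have hfu2 : f u2 = 1 := by simpa using hf 0
    have hf0 : f u1 = 0 := by simpa using hf 1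
    have hf1 : f (A u1) = 1 := by simpa using hf 2
    have hf2 : f (A u2) = 0 := by simpa using hf 3
    have hgu2 : g u2 = 0 := by simpa using hg 0
    have hg0 : g u1 = 0 := by simpa using hg 1
    have hg1 : g (A u1) = 0 := by simpa using hg 2
    have hg2 : g (A u2) = 1 := by simpa using hg 3
    set T := f.smulRight u1 + g.smulRight u2 with hT
    set R := T * A * T with hR
    have hTA1 : T (A u1) = u1 := by simp [hT, hf1, hg1]
    have hTA2 : T (A u2) = u2 := by simp [hT, hf2, hg2]
    have hRx : ∀ x, R x = f x • u1 + g x • u2 := by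
      intro x
      rw [hR, TAT_apply, hTA1, hTA2]
    have hR2 : ∀ x, R (R x) = g x • u1 := by
      intro x
      rw [hRx (R x), hRx x, map_add, map_smul, map_smul, map_add, map_smul, map_smul,
        hf0, hg0, hfu2, hgu2]
      simp
    have hR3 : ∀ x, R (R (R x)) = 0 := by
      intro x
      rw [hRx (R (R x)), hR2 x, map_smul, map_smul, hf0, hg0]
      simp
    refine ⟨T, ?_, ?_⟩
    · intro hzero
      have h1 : (R ^ 2) (A u2) = u1 := by
        rw [pow_two]
        show R (R (A u2)) = _
        rw [hR2 (A u2), hg2, one_smul]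
      rw [← hR] at hzero
      rw [hzero] at h1
      simp only [ContinuousLinearMap.zero_apply] at h1
      exact hu1 h1.symm
    · rw [← hR]
      ext x
      have : (R ^ 3) x = R (R (R x)) := by rw [pow_succ, pow_two]; rfl
      rw [this, hR3 x]
      simp

lemma construction_scalar (A : X →L[ℂ] X) (hdim : 3 ≤ Module.rank ℂ X) {c : ℂ}
    (hc : c ≠ 0) (hA : ∀ x : X, A x = c • x) :
    ∃ T : X →L[ℂ] X, (A * T * A) ^ 2 ≠ 0 ∧ (A * T * A) ^ 3 = 0 := by
  have hnt : ∃ x : X, x ≠ 0 := by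
    obtain ⟨x, hx⟩ := exists_notin_span_singleton hdim 0
    exact ⟨x, fun h => hx (by rw [h]; exact zero_mem _)⟩
  obtain ⟨e1, he1⟩ := hnt
  obtain ⟨e2, he2⟩ := exists_notin_span_singleton hdim e1
  obtain ⟨e3, he3⟩ := exists_notin_span_pair hdim e2 e1
  have he3' : e3 ∉ span ℂ ({e2, e1} : Set X) := he3
  have li3 := li_triple he3' he2 he1
  obtain ⟨f, hf⟩ := exists_dual_clm _ li3 ![0, 0, 1]
  obtain ⟨g, hg⟩ := exists_dual_clm _ li3 ![0, 1, 0]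
  have hf3 : f e3 = 0 := by simpa using hf 0
  have hf2 : f e2 = 0 := by simpa using hf 1
  have hf1 : f e1 = 1 := by simpa using hf 2
  have hg3 : g e3 = 0 := by simpa using hg 0
  have hg2 : g e2 = 1 := by simpa using hg 1
  have hg1 : g e1 = 0 := by simpa using hg 2
  set T := f.smulRight e2 + g.smulRight e3 with hT
  set S := A * T * A with hS
  have hTx : ∀ x, T x = f x • e2 + g x • e3 := by intro x; simp [hT]
  have hSx : ∀ x, S x = (c * c) • T x := by
    intro x
    have h1 : S x = A (T (A x)) := rfl
    rw [h1, hA x, map_smul, map_smul, hA (T x), smul_smul]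
  have hTT : ∀ x, T (T x) = f x • e3 := by
    intro x
    rw [hTx x, map_add, map_smul, map_smul, hTx e2, hTx e3, hf2, hg2, hf3, hg3]
    module
  have hS2 : ∀ x, S (S x) = ((c*c) * (c*c) * f x) • e3 := by
    intro x
    rw [hSx (S x), hSx x, map_smul, hTT x, smul_smul, smul_smul]
  have he3ne : e3 ≠ 0 := fun h => he3 (h ▸ zero_mem _)
  refine ⟨T, ?_, ?_⟩
  · intro hzero
    have h1 : (S ^ 2) e1 = ((c*c)*(c*c)) • e3 := by
      rw [pow_two]
      show S (S e1) = _
      rw [hS2 e1, hf1, mul_one]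
    rw [← hS] at hzero
    rw [hzero] at h1
    simp only [ContinuousLinearMap.zero_apply] at h1
    exact (smul_ne_zero (by simp [hc]) he3ne) h1.symm
  · rw [← hS]
    ext x
    have h1 : (S ^ 3) x = S (S (S x)) := by rw [pow_succ, pow_two]; rfl
    have hfSx : f (S x) = 0 := by
      rw [hSx x, map_smul, hTx x, map_add, map_smul, map_smul, hf2, hf3]
      simp
    rw [h1, hS2 (S x), hfSx, mul_zero, zero_smul]
    simp

end Aux

theorem rank_one_iff_descent_triple_mem {X : Type*} [NormedAddCommGroup X]
    [NormedSpace ℂ X] [CompleteSpace X] (hdim : 3 ≤ Module.rank ℂ X)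
    (A : X →L[ℂ] X) (hA : A ≠ 0) :
    Module.rank ℂ (LinearMap.range (A : X →ₗ[ℂ] X)) = 1 ↔
      ∀ T : X →L[ℂ] X,
        descent (A * T * A) ∈ ({1, 2} : Set ℕ∞) ∧ descent (T * A * T) ∈ ({1, 2} : Set ℕ∞) := by
  constructor
  · intro h1 T
    exact ⟨descent_mem_of_rank_le_one hdim _ (rank_range_ATA_le A T h1),
           descent_mem_of_rank_le_one hdim _ (rank_range_TAT_le A T h1)⟩
  · intro hall
    by_contra hno
    have hrk : ∀ w : X, ∃ z : X, A z ∉ Submodule.span ℂ {w} := exists_Az_notin A hA hno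
    by_cases hsc : ∀ x : X, A x ∈ Submodule.span ℂ {x}
    · have hnt : ∃ x : X, x ≠ 0 := by
        obtain ⟨x, hx⟩ := exists_notin_span_singleton hdim (0 : X)
        exact ⟨x, fun h => hx (by rw [h]; exact Submodule.zero_mem _)⟩
      obtain ⟨c, hc⟩ := scalar_of_all_eigen A hsc hnt
      have hc0 : c ≠ 0 := by
        rintro rfl
        apply hA
        ext x
        simp [hc x]
      obtain ⟨T, h2, h3⟩ := construction_scalar A hdim hc0 hc
      exact descent_not_mem h2 h3 ((hall T).1)
    · push_neg at hsc
      obtain ⟨u1, u2, hp, hp2, hdisj⟩ := hearts A hdim hrk hsc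
      rcases hdisj with h | h
      · obtain ⟨T, h2, h3⟩ := construction_main A hp hp2 h
        exact descent_not_mem h2 h3 ((hall T).2)
      · have h' : u2 ∉ Submodule.span ℂ {A u2, A u1} := by
          rw [show ({A u2, A u1} : Set X) = {A u1, A u2} from Set.pair_comm _ _]
          exact h
        obtain ⟨T, h2, h3⟩ := construction_main A hp2 hp h'
        exact descent_not_mem h2 h3 ((hall T).2)
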